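/- arXiv:1312.2655 — 2 statements merged into one kernel-verified Lean document; each statement's English description precedes it below -/
import Mathlib

section
/- Let p be an odd prime and K a field of characteristic p. The modular group M_{p^3} = ⟨x, y | x^{p^2} = y^p = 1, y x y^{-1} = x^{1+p}⟩ of order p^3 and exponent p^2 embeds into U_{p+1}(K), but does not embed into U_r(K) for any r ≤ p. -/
/-- An upper-triangular unipotent matrix: zeros below the diagonal, ones on the diagonal. -/
def IsUnipotentUpper {R : Type*} [CommRing R] {n : ℕ} (A : Matrix (Fin n) (Fin n) R) : Prop :=
  (∀ i j : Fin n, j < i → A i j = 0) ∧ ∀ i : Fin n, A i i = 1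


section GroupAux

variable {G : Type*} [Group G]

lemma aux_swap {u v : G} {e : ℕ} (h : v * u = u ^ e * v) :
    ∀ j k : ℕ, v ^ j * u ^ k = u ^ (e ^ j * k) * v ^ j := by
  have h1 : ∀ k : ℕ, v * u ^ k = u ^ (e * k) * v := by
    intro k
    induction k with
    | zero => simp
    | succ k ih =>
      rw [pow_succ, ← mul_assoc, ih, mul_assoc, h, ← mul_assoc, ← pow_add]
      ring_nf
  intro j
  induction j with
  | zero => simp
  | succ j ih =>
    intro k
    calc v ^ (j+1) * u ^ k = v ^ j * (v * u ^ k) := by rw [pow_succ, mul_assoc]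
      _ = v ^ j * (u ^ (e*k) * v) := by rw [h1]
      _ = (v ^ j * u ^ (e*k)) * v := by rw [mul_assoc]
      _ = (u ^ (e ^ j * (e*k)) * v ^ j) * v := by rw [ih]
      _ = u ^ (e ^ (j+1) * k) * v ^ (j+1) := by
            rw [mul_assoc, ← pow_succ, show e ^ j * (e*k) = e ^ (j+1) * k from by ring]

lemma aux_comb {u v : G} {m n e : ℕ} [NeZero m] [NeZero n]
    (hu : u ^ m = 1) (hv : v ^ n = 1) (h : v * u = u ^ e * v)
    (a c : ZMod m) (b d : ZMod n) :
    (u ^ a.val * v ^ b.val) * (u ^ c.val * v ^ d.val)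
      = u ^ ((a + c * (e : ZMod m) ^ b.val).val) * v ^ ((b + d).val) := by
  have key : ∀ N : ℕ, u ^ ((N : ZMod m)).val = u ^ N := by
    intro N
    rw [ZMod.val_natCast, ← pow_eq_pow_mod N hu]
  have keyv : ∀ N : ℕ, v ^ ((N : ZMod n)).val = v ^ N := by
    intro N
    rw [ZMod.val_natCast, ← pow_eq_pow_mod N hv]
  have e1 : ((a.val + e ^ b.val * c.val : ℕ) : ZMod m) = a + c * (e : ZMod m) ^ b.val := by
    push_cast [ZMod.natCast_val, ZMod.cast_id]
    ring
  have e2 : ((b.val + d.val : ℕ) : ZMod n) = b + d := by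
    push_cast [ZMod.natCast_val, ZMod.cast_id]
    ring
  rw [← e1, ← e2, key, keyv]
  rw [mul_assoc, ← mul_assoc (v ^ b.val), aux_swap h b.val c.val]
  rw [pow_add, pow_add]
  group

lemma range_subgroup_eq_top [Finite G] {u v : G} {m n e : ℕ}
    (hm : 1 < m) (hn : 1 < n)
    (hu : u ^ m = 1) (hv : v ^ n = 1) (h : v * u = u ^ e * v)
    (hgen : Subgroup.closure ({u, v} : Set G) = ⊤) :
    Function.Surjective (fun ab : ZMod m × ZMod n => u ^ ab.1.val * v ^ ab.2.val) := by
  haveI : NeZero m := ⟨by omega⟩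
  haveI : NeZero n := ⟨by omega⟩
  haveI : Fact (1 < m) := ⟨hm⟩
  haveI : Fact (1 < n) := ⟨hn⟩
  set f : ZMod m × ZMod n → G := fun ab => u ^ ab.1.val * v ^ ab.2.val with hf
  have mulmem : ∀ g₁ g₂, g₁ ∈ Set.range f → g₂ ∈ Set.range f → g₁ * g₂ ∈ Set.range f := by
    rintro _ _ ⟨⟨a, b⟩, rfl⟩ ⟨⟨c, d⟩, rfl⟩
    exact ⟨⟨a + c * (e : ZMod m) ^ b.val, b + d⟩, (aux_comb hu hv h a c b d).symm⟩
  have onemem : (1 : G) ∈ Set.range f := ⟨⟨0, 0⟩, by simp [hf, ZMod.val_zero]⟩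
  have powmem : ∀ g, g ∈ Set.range f → ∀ k : ℕ, g ^ k ∈ Set.range f := by
    intro g hg k
    induction k with
    | zero => simpa using onemem
    | succ k ih => rw [pow_succ]; exact mulmem _ _ ih hg
  let S : Subgroup G :=
    { carrier := Set.range f
      mul_mem' := fun ha hb => mulmem _ _ ha hb
      one_mem' := onemem
      inv_mem' := by
        intro g hg
        have h1 : g * g ^ (Nat.card G - 1) = 1 := by
          rw [← pow_succ', Nat.sub_add_cancel Nat.card_pos, pow_card_eq_one']
        have h2 : g⁻¹ = g ^ (Nat.card G - 1) := inv_eq_of_mul_eq_one_right h1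
        show g⁻¹ ∈ Set.range f
        rw [h2]
        exact powmem g hg _ }
  have hsub : Subgroup.closure ({u, v} : Set G) ≤ S := by
    rw [Subgroup.closure_le]
    rintro w hw
    rcases hw with rfl | rfl
    · exact ⟨⟨1, 0⟩, by simp [hf, ZMod.val_zero, ZMod.val_one]⟩
    · exact ⟨⟨0, 1⟩, by simp [hf, ZMod.val_zero, ZMod.val_one]⟩
  intro g
  have hg : g ∈ S := hsub (hgen ▸ Subgroup.mem_top g)
  exact hg

end GroupAux

section MatrixAux

variable {K : Type*} [Field K] {p : ℕ}

def shiftM (p : ℕ) (K : Type*) [Field K] (k : ℕ) : Matrix (Fin (p+1)) (Fin (p+1)) K :=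
  Matrix.of fun i j => if (j : ℕ) = (i : ℕ) + k then 1 else 0

def EM (p : ℕ) (K : Type*) [Field K] : Matrix (Fin (p+1)) (Fin (p+1)) K :=
  Matrix.of fun i j => if (i : ℕ) = 0 ∧ (j : ℕ) = p - 1 then 1 else 0

lemma fin_sum_eq (f : Fin (p+1) → K) (b₀ : Fin (p+1)) (h : ∀ b, b ≠ b₀ → f b = 0) :
    ∑ b, f b = f b₀ :=
  Finset.sum_eq_single b₀ (fun b _ hb => h b hb) (fun hb => absurd (Finset.mem_univ _) hb)

lemma shiftM_zero : shiftM p K 0 = 1 := by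
  ext i j
  simp only [shiftM, Matrix.of_apply, Matrix.one_apply, Fin.ext_iff]
  split_ifs with h1 h2 h2 <;> first | rfl | (exfalso; omega) | (exfalso; simp_all) | (exfalso; simp_all; omega)

lemma shiftM_mul (k l : ℕ) : shiftM p K k * shiftM p K l = shiftM p K (k + l) := by
  ext i j
  simp only [Matrix.mul_apply, shiftM, Matrix.of_apply]
  by_cases h : (i : ℕ) + k ≤ p
  · rw [fin_sum_eq _ (⟨(i : ℕ) + k, by omega⟩ : Fin (p+1))
      (fun b hb => by
        have hb' : (b : ℕ) ≠ (i : ℕ) + k := fun hc => hb (Fin.ext (by simpa using hc))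
        simp [hb'])]
    simp only [Fin.val_mk]
    split_ifs with h1 h2 h2 <;> first | ring1 | (exfalso; omega) | (exfalso; simp_all) | (exfalso; simp_all; omega)
  · have h3 : ¬((j : ℕ) = (i : ℕ) + (k + l)) := by omega
    rw [if_neg h3]
    apply Finset.sum_eq_zero
    intro b _
    have : ¬((b : ℕ) = (i : ℕ) + k) := by omega
    simp [this]

lemma shiftM_pow (k : ℕ) : (shiftM p K 1) ^ k = shiftM p K k := by
  induction k with
  | zero => rw [pow_zero, shiftM_zero]
  | succ k ih => rw [pow_succ, ih, shiftM_mul]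

lemma shiftM_eq_zero {k : ℕ} (hk : p + 1 ≤ k) : shiftM p K k = 0 := by
  ext i j
  simp only [shiftM, Matrix.of_apply, Matrix.zero_apply]
  have : ¬((j : ℕ) = (i : ℕ) + k) := by omega
  simp [this]

lemma EM_mul_shiftM_one (hp : 1 ≤ p) : EM p K * shiftM p K 1 = shiftM p K p := by
  ext i j
  simp only [Matrix.mul_apply, EM, shiftM, Matrix.of_apply]
  rw [fin_sum_eq _ (⟨p - 1, by omega⟩ : Fin (p+1))
    (fun b hb => by
      have hb' : ¬((i : ℕ) = 0 ∧ (b : ℕ) = p - 1) := by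
        rintro ⟨_, hc⟩; exact hb (Fin.ext (by simpa using hc))
      simp [hb']
      intro _ hi hc; exact hb' ⟨by simp [hi], hc⟩)]
  simp only [Fin.val_mk]
  split_ifs with h1 h2 h2 <;> first | ring1 | (exfalso; omega) | (exfalso; simp_all) | (exfalso; simp_all; omega)

lemma shiftM_mul_EM {k : ℕ} (hk : 1 ≤ k) : shiftM p K k * EM p K = 0 := by
  ext i j
  simp only [Matrix.mul_apply, shiftM, EM, Matrix.of_apply, Matrix.zero_apply]
  apply Finset.sum_eq_zero
  intro b _
  by_cases hb : (b : ℕ) = (i : ℕ) + k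
  · have : ¬((b : ℕ) = 0 ∧ (j : ℕ) = p - 1) := by
      rintro ⟨hc, _⟩; omega
    simp [this]
    intro hb0 _ _; simp only [hb0, Fin.val_zero] at hb; omega
  · simp [hb]

lemma EM_mul_EM (hp : 2 ≤ p) : EM p K * EM p K = 0 := by
  ext i j
  simp only [Matrix.mul_apply, EM, Matrix.of_apply, Matrix.zero_apply]
  apply Finset.sum_eq_zero
  intro b _
  by_cases hb : (i : ℕ) = 0 ∧ (b : ℕ) = p - 1
  · have : ¬((b : ℕ) = 0 ∧ (j : ℕ) = p - 1) := by
      rintro ⟨hc, _⟩; omega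
    simp [hb, this]
    omega
  · simp [hb]
    intro _ _ hi hc; exact hb ⟨by simp [hi], hc⟩

end MatrixAux

section MatrixAux2

variable {K : Type*} [Field K] {p : ℕ}

lemma sq_zero_binom {R : Type*} [Ring R] (x : R) (hx : x * x = 0) (k : ℕ) :
    (1 + x) ^ k = 1 + k • x := by
  induction k with
  | zero => simp
  | succ k ih =>
    rw [pow_succ, ih, mul_add, mul_one, add_mul, one_mul, smul_mul_assoc, hx, smul_zero,
      succ_nsmul]
    abel

lemma unip_one {r : ℕ} : IsUnipotentUpper (1 : Matrix (Fin r) (Fin r) K) := by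
  constructor
  · intro i j hij
    exact Matrix.one_apply_ne (Ne.symm (ne_of_lt hij))
  · intro i; simp

lemma unip_mul {r : ℕ} {A B : Matrix (Fin r) (Fin r) K}
    (hA : IsUnipotentUpper A) (hB : IsUnipotentUpper B) : IsUnipotentUpper (A * B) := by
  constructor
  · intro i j hij
    rw [Matrix.mul_apply]
    apply Finset.sum_eq_zero
    intro b _
    by_cases hb : b < i
    · rw [hA.1 i b hb, zero_mul]
    · have : j < b := lt_of_lt_of_le hij (not_lt.mp hb)
      rw [hB.1 b j this, mul_zero]
  · intro i
    rw [Matrix.mul_apply]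
    rw [Finset.sum_eq_single i]
    · rw [hA.2, hB.2, one_mul]
    · intro b _ hb
      rcases lt_or_gt_of_ne hb with h | h
      · rw [hA.1 i b h, zero_mul]
      · rw [hB.1 b i h, mul_zero]
    · intro hc; exact absurd (Finset.mem_univ _) hc

lemma unip_pow {r : ℕ} {A : Matrix (Fin r) (Fin r) K} (hA : IsUnipotentUpper A) (k : ℕ) :
    IsUnipotentUpper (A ^ k) := by
  induction k with
  | zero => rw [pow_zero]; exact unip_one
  | succ k ih => rw [pow_succ]; exact unip_mul ih hA

lemma unip_Xm (hp : 1 ≤ p) : IsUnipotentUpper (1 + shiftM p K 1) := by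
  constructor
  · intro i j hij
    have h1 : (1 : Matrix (Fin (p+1)) (Fin (p+1)) K) i j = 0 :=
      Matrix.one_apply_ne (Ne.symm (ne_of_lt hij))
    have h2 : ¬((j:ℕ) = (i:ℕ) + 1) := by
      have := hij; rw [Fin.lt_def] at this; omega
    simp [Matrix.add_apply, h1, shiftM, h2]
  · intro i
    have h2 : ¬((i:ℕ) = (i:ℕ) + 1) := by omega
    simp [Matrix.add_apply, shiftM, h2]

lemma unip_Ym (hp : 2 ≤ p) : IsUnipotentUpper (1 + EM p K) := by
  constructor
  · intro i j hij
    have h1 : (1 : Matrix (Fin (p+1)) (Fin (p+1)) K) i j = 0 :=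
      Matrix.one_apply_ne (Ne.symm (ne_of_lt hij))
    have h2 : ¬((i:ℕ) = 0 ∧ (j:ℕ) = p - 1) := by
      rintro ⟨hi, hj⟩; rw [Fin.lt_def] at hij; omega
    simp [Matrix.add_apply, h1, EM, h2]
    intro hi hc; exact h2 ⟨by simp [hi], hc⟩
  · intro i
    have h2 : ¬((i:ℕ) = 0 ∧ (i:ℕ) = p - 1) := by
      rintro ⟨hi, hj⟩; omega
    simp [Matrix.add_apply, EM, h2]
    intro hi hc; exact h2 ⟨by simp [hi], hc⟩

variable [CharP K p] [Fact p.Prime]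

lemma shiftM_pow_gen (a k : ℕ) : (shiftM p K a) ^ k = shiftM p K (a * k) := by
  induction k with
  | zero => rw [pow_zero, Nat.mul_zero, shiftM_zero]
  | succ k ih => rw [pow_succ, ih, shiftM_mul, Nat.mul_succ]

lemma Xm_pow_p : (1 + shiftM p K 1) ^ p = 1 + shiftM p K p := by
  rw [add_pow_char_of_commute _ (Commute.one_left _), one_pow, shiftM_pow]

lemma Xm_pow_p2 : (1 + shiftM p K 1) ^ (p ^ 2) = 1 := by
  have hp2 : 2 ≤ p := (Fact.out : p.Prime).two_le
  rw [pow_two, pow_mul, Xm_pow_p,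
    add_pow_char_of_commute _ (Commute.one_left _), one_pow, shiftM_pow_gen,
    shiftM_eq_zero (by nlinarith), add_zero]

lemma Ym_pow_p (hp2 : 2 ≤ p) : (1 + EM p K) ^ p = 1 := by
  rw [sq_zero_binom _ (EM_mul_EM hp2)]
  have : p • EM p K = 0 := by
    ext i j
    simp only [Matrix.smul_apply, Matrix.zero_apply, nsmul_eq_mul]
    rw [CharP.cast_eq_zero K, zero_mul]
  rw [this, add_zero]

lemma XYrel (hp2 : 2 ≤ p) :
    (1 + EM p K) * (1 + shiftM p K 1) =
      (1 + shiftM p K 1) ^ (1 + p) * (1 + EM p K) := by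
  have h1 : (1 + shiftM p K 1) ^ (1 + p) = 1 + shiftM p K 1 + shiftM p K p := by
    rw [pow_add, pow_one, Xm_pow_p, mul_add, mul_one, add_mul, one_mul, shiftM_mul,
      shiftM_eq_zero (k := 1 + p) (by omega), add_zero]
  rw [h1]
  have hEN : EM p K * shiftM p K 1 = shiftM p K p := EM_mul_shiftM_one (by omega)
  have hNE : shiftM p K 1 * EM p K = 0 := shiftM_mul_EM (le_refl 1)
  have hSE : shiftM p K p * EM p K = 0 := shiftM_mul_EM (by omega : 1 ≤ p)
  simp only [mul_add, add_mul, mul_one, one_mul, hEN, hNE, hSE, add_zero, zero_add]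
  abel

lemma mul_shift_apply (A : Matrix (Fin (p+1)) (Fin (p+1)) K) (k : ℕ) (i j j' : Fin (p+1))
    (hj : (j:ℕ) = (j':ℕ) + k) : (A * shiftM p K k) i j = A i j' := by
  rw [Matrix.mul_apply]
  rw [fin_sum_eq _ j' (fun b hb => by
    have : ¬((j:ℕ) = (b:ℕ) + k) := by
      intro hc
      exact hb (Fin.ext (by omega))
    simp [shiftM, this])]
  simp [shiftM, hj]

lemma Xm_entry01 (hp : 1 ≤ p) (α : ℕ) :
    ((1 + shiftM p K 1) ^ α) ⟨0, by omega⟩ ⟨1, by omega⟩ = (α : K) := by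
  induction α with
  | zero =>
    simp [Matrix.one_apply, Fin.ext_iff]
  | succ α ih =>
    rw [pow_succ, mul_add, mul_one, Matrix.add_apply]
    rw [mul_shift_apply _ 1 _ _ ⟨0, by omega⟩ (by simp)]
    rw [ih, (unip_pow (unip_Xm hp) α).2]
    push_cast
    ring

lemma Xm_pow_mul_EM (α : ℕ) : ((1 + shiftM p K 1) ^ α) * EM p K = EM p K := by
  induction α with
  | zero => rw [pow_zero, one_mul]
  | succ α ih =>
    rw [pow_succ, mul_assoc, add_mul, one_mul, shiftM_mul_EM (le_refl 1), add_zero, ih]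

lemma kernel_lemma (hp3 : 3 ≤ p) (s : ZMod (p^2)) (t : ZMod p)
    (h : (1 + shiftM p K 1) ^ s.val * (1 + EM p K) ^ t.val = 1) : s = 0 ∧ t = 0 := by
  haveI : NeZero p := ⟨by omega⟩
  haveI : NeZero (p^2) := ⟨by positivity⟩
  set α := s.val with hα
  set β := t.val with hβ
  have h1 : (1 + shiftM p K 1) ^ α + β • EM p K = 1 := by
    rw [sq_zero_binom _ (EM_mul_EM (p:=p) (K:=K) (by omega))] at h
    rw [mul_add, mul_one, mul_smul_comm, Xm_pow_mul_EM] at h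
    exact h
  -- entry (0,1) gives p ∣ α
  have hpdvd : p ∣ α := by
    have := congrFun (congrFun h1 ⟨0, by omega⟩) ⟨1, by omega⟩
    rw [Matrix.add_apply, Xm_entry01 (by omega)] at this
    have hE : (β • EM p K) (⟨0, by omega⟩ : Fin (p+1)) (⟨1, by omega⟩ : Fin (p+1)) = 0 := by
      have h10 : ¬((1:ℕ) = p - 1) := by omega
      simp [Matrix.smul_apply, EM, h10]
    have hone : (1 : Matrix (Fin (p+1)) (Fin (p+1)) K) ⟨0, by omega⟩ ⟨1, by omega⟩ = 0 :=
      Matrix.one_apply_ne (by simp [Fin.ext_iff])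
    rw [hE, hone, add_zero] at this
    exact (CharP.cast_eq_zero_iff K p α).mp this
  obtain ⟨α₁, hα₁⟩ := hpdvd
  have hS2 : shiftM p K p * shiftM p K p = 0 := by
    rw [shiftM_mul, shiftM_eq_zero (by omega)]
  have h2 : (1 + shiftM p K 1) ^ α = 1 + α₁ • shiftM p K p := by
    rw [hα₁, pow_mul, Xm_pow_p, sq_zero_binom _ hS2]
  have h3 : α₁ • shiftM p K p + β • EM p K = 0 := by
    have h4 := h1
    rw [h2, add_assoc] at h4
    have h5 : (1 : Matrix (Fin (p+1)) (Fin (p+1)) K) + (α₁ • shiftM p K p + β • EM p K)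
        = 1 + 0 := by rw [add_zero]; exact h4
    exact add_left_cancel h5
  -- entry (0, p) gives p ∣ α₁
  have hA1 : (α₁ : K) = 0 := by
    have hh := congrFun (congrFun h3 ⟨0, by omega⟩) ⟨p, by omega⟩
    have e1 : shiftM p K p (⟨0, by omega⟩ : Fin (p+1)) (⟨p, by omega⟩ : Fin (p+1)) = 1 := by
      simp only [shiftM, Matrix.of_apply, Fin.val_mk]
      exact if_pos (by omega)
    have e2 : EM p K (⟨0, by omega⟩ : Fin (p+1)) (⟨p, by omega⟩ : Fin (p+1)) = 0 := by
      have hc : ¬(True ∧ (p:ℕ) = p - 1) := by simp only [true_and]; omega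
      simp only [EM, Matrix.of_apply, Fin.val_mk]
      exact if_neg hc
    rw [Matrix.add_apply, Matrix.smul_apply, Matrix.smul_apply, Matrix.zero_apply, e1, e2,
      smul_zero, add_zero, nsmul_eq_mul, mul_one] at hh
    exact hh
  have hB1 : (β : K) = 0 := by
    have hh := congrFun (congrFun h3 ⟨0, by omega⟩) ⟨p - 1, by omega⟩
    have e1 : shiftM p K p (⟨0, by omega⟩ : Fin (p+1)) (⟨p - 1, by omega⟩ : Fin (p+1)) = 0 := by
      have hc : ¬((p - 1 : ℕ) = 0 + p) := by omega
      simp only [shiftM, Matrix.of_apply, Fin.val_mk]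
      exact if_neg hc
    have e2 : EM p K (⟨0, by omega⟩ : Fin (p+1)) (⟨p - 1, by omega⟩ : Fin (p+1)) = 1 := by
      simp only [EM, Matrix.of_apply, Fin.val_mk]
      exact if_pos ⟨trivial, trivial⟩
    rw [Matrix.add_apply, Matrix.smul_apply, Matrix.smul_apply, Matrix.zero_apply, e1, e2,
      smul_zero, zero_add, nsmul_eq_mul, mul_one] at hh
    exact hh
  constructor
  · have hp1 : p ∣ α₁ := (CharP.cast_eq_zero_iff K p α₁).mp hA1
    obtain ⟨α₂, hα₂⟩ := hp1
    have hlt : α < p ^ 2 := ZMod.val_lt s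
    have h00 : α₂ = 0 := by
      by_contra hne
      have h1' : 1 ≤ α₂ := Nat.one_le_iff_ne_zero.mpr hne
      have hge : p ^ 2 ≤ α := by
        calc p ^ 2 = p * (p * 1) := by ring
          _ ≤ p * (p * α₂) := by gcongr
          _ = α := by rw [← hα₂, ← hα₁]
      omega
    have h0 : α = 0 := by rw [hα₁, hα₂, h00, Nat.mul_zero, Nat.mul_zero]
    rw [← ZMod.val_eq_zero, ← hα, h0]
  · have hp1 : p ∣ β := (CharP.cast_eq_zero_iff K p β).mp hB1
    have hlt : β < p := ZMod.val_lt t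
    have h0 : β = 0 := Nat.eq_zero_of_dvd_of_lt hp1 hlt
    rw [← ZMod.val_eq_zero, ← hβ, h0]

end MatrixAux2

section Nilp

variable {K : Type*} [Field K]

lemma strict_pow_zero {r : ℕ} (A : Matrix (Fin r) (Fin r) K)
    (hA : ∀ i j : Fin r, (j:ℕ) ≤ (i:ℕ) → A i j = 0) :
    ∀ k : ℕ, ∀ i j : Fin r, (j:ℕ) < (i:ℕ) + k → (A ^ k) i j = 0 := by
  intro k
  induction k with
  | zero =>
    intro i j hij
    rw [pow_zero]
    exact Matrix.one_apply_ne (by rintro rfl; omega)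
  | succ k ih =>
    intro i j hij
    rw [pow_succ, Matrix.mul_apply]
    apply Finset.sum_eq_zero
    intro b _
    by_cases hb : (b:ℕ) < (i:ℕ) + k
    · rw [ih i b hb, zero_mul]
    · rw [hA b j (by omega), mul_zero]

lemma strict_pow_all_zero {r : ℕ} (A : Matrix (Fin r) (Fin r) K)
    (hA : ∀ i j : Fin r, (j:ℕ) ≤ (i:ℕ) → A i j = 0) : A ^ r = 0 := by
  ext i j
  rw [Matrix.zero_apply]
  exact strict_pow_zero A hA r i j (by omega)

end Nilp

section MoreGroupAux

lemma pow_val_add {G : Type*} [Group G] {u : G} {m : ℕ} [NeZero m] (hu : u ^ m = 1)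
    (a b : ZMod m) : u ^ ((a + b).val) = u ^ a.val * u ^ b.val := by
  rw [← pow_add, pow_eq_pow_mod (a.val + b.val) hu, pow_eq_pow_mod ((a+b).val) hu]
  congr 1
  have h1 : ((a.val + b.val : ℕ) : ZMod m) = a + b := by
    push_cast [ZMod.natCast_val, ZMod.cast_id]
    ring
  calc (a+b).val % m = (a+b).val := Nat.mod_eq_of_lt (ZMod.val_lt _)
    _ = ((a.val + b.val : ℕ) : ZMod m).val := by rw [h1]
    _ = (a.val + b.val) % m := ZMod.val_natCast _ _

end MoreGroupAux


/-- For `p` an odd prime and `K` of characteristic `p`, the modular group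
`M_{p³} = ⟨x, y ∣ x^{p²} = y^p = 1, y x y⁻¹ = x^{1+p}⟩` of order `p³` (realized here as any
group `M` of order `p³` generated by `x, y` satisfying these relations) embeds into
`U_{p+1}(K)`, but does not embed into `U_r(K)` for any `r ≤ p`. -/
theorem stmt9 (p : ℕ) (hp : p.Prime) (hodd : p ≠ 2)
    (K : Type*) [Field K] [CharP K p]
    (M : Type*) [Group M] (x y : M)
    (hgen : Subgroup.closure ({x, y} : Set M) = ⊤)
    (hx : x ^ (p ^ 2) = 1) (hy : y ^ p = 1)
    (hrel : y * x * y⁻¹ = x ^ (1 + p))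
    (hcard : Nat.card M = p ^ 3) :
    (∃ φ : M →* (Matrix (Fin (p + 1)) (Fin (p + 1)) K)ˣ,
        Function.Injective φ ∧
        ∀ g, IsUnipotentUpper ((φ g : (Matrix (Fin (p + 1)) (Fin (p + 1)) K)ˣ) :
          Matrix (Fin (p + 1)) (Fin (p + 1)) K)) ∧
    ∀ r ≤ p, ¬ ∃ φ : M →* (Matrix (Fin r) (Fin r) K)ˣ,
        Function.Injective φ ∧
        ∀ g, IsUnipotentUpper ((φ g : (Matrix (Fin r) (Fin r) K)ˣ) :
          Matrix (Fin r) (Fin r) K) := by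
  haveI : Fact p.Prime := ⟨hp⟩
  have hp3 : 3 ≤ p := by have h2 := hp.two_le; omega
  haveI : NeZero p := ⟨by omega⟩
  haveI : NeZero (p ^ 2) := ⟨by positivity⟩
  haveI hMfin : Finite M := Nat.finite_of_card_ne_zero (by rw [hcard]; positivity)
  have hswapM : y * x = x ^ (1 + p) * y := by
    rw [mul_inv_eq_iff_eq_mul] at hrel
    exact hrel
  -- the normal form bijection on M
  set fM : ZMod (p^2) × ZMod p → M := fun ab => x ^ ab.1.val * y ^ ab.2.val with hfM
  have hsurj : Function.Surjective fM :=
    range_subgroup_eq_top (by nlinarith) (by omega) hx hy hswapM hgen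
  have hcard2 : Nat.card (ZMod (p^2) × ZMod p) = Nat.card M := by
    rw [Nat.card_prod, Nat.card_zmod, Nat.card_zmod, hcard]
    ring
  have hbij : Function.Bijective fM :=
    (Nat.bijective_iff_surjective_and_card fM).mpr ⟨hsurj, hcard2⟩
  let eqv := Equiv.ofBijective fM hbij
  -- the matrix units
  have hXp2 : (1 + shiftM p K 1) ^ (p ^ 2) = 1 := Xm_pow_p2
  have hYp : (1 + EM p K) ^ p = 1 := Ym_pow_p (by omega)
  let Xu : (Matrix (Fin (p+1)) (Fin (p+1)) K)ˣ :=
    ⟨1 + shiftM p K 1, (1 + shiftM p K 1) ^ (p^2 - 1),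
      by rw [← pow_succ', Nat.sub_add_cancel (by nlinarith : 1 ≤ p ^ 2)]; exact hXp2,
      by rw [← pow_succ, Nat.sub_add_cancel (by nlinarith : 1 ≤ p ^ 2)]; exact hXp2⟩
  let Yu : (Matrix (Fin (p+1)) (Fin (p+1)) K)ˣ :=
    ⟨1 + EM p K, (1 + EM p K) ^ (p - 1),
      by rw [← pow_succ', Nat.sub_add_cancel (by omega)]; exact hYp,
      by rw [← pow_succ, Nat.sub_add_cancel (by omega)]; exact hYp⟩
  have hXuval : ∀ k : ℕ, ((Xu ^ k : (Matrix (Fin (p+1)) (Fin (p+1)) K)ˣ) :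
      Matrix (Fin (p+1)) (Fin (p+1)) K) = (1 + shiftM p K 1) ^ k := fun k =>
    Units.val_pow_eq_pow_val Xu k
  have hYuval : ∀ k : ℕ, ((Yu ^ k : (Matrix (Fin (p+1)) (Fin (p+1)) K)ˣ) :
      Matrix (Fin (p+1)) (Fin (p+1)) K) = (1 + EM p K) ^ k := fun k =>
    Units.val_pow_eq_pow_val Yu k
  have hXu : Xu ^ (p ^ 2) = 1 := by
    apply Units.ext
    rw [hXuval, Units.val_one]
    exact hXp2
  have hYu : Yu ^ p = 1 := by
    apply Units.ext
    rw [hYuval, Units.val_one]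
    exact hYp
  have hswapU : Yu * Xu = Xu ^ (1 + p) * Yu := by
    apply Units.ext
    rw [Units.val_mul, Units.val_mul, hXuval]
    exact XYrel (by omega)
  set fU : ZMod (p^2) × ZMod p → (Matrix (Fin (p+1)) (Fin (p+1)) K)ˣ :=
    fun ab => Xu ^ ab.1.val * Yu ^ ab.2.val with hfU
  have hsymm_one : eqv.symm 1 = (0, 0) := by
    rw [Equiv.symm_apply_eq]
    show (1 : M) = fM (0, 0)
    simp [hfM, ZMod.val_zero]
  have hmul : ∀ g h : M, eqv.symm (g * h) =
      ((eqv.symm g).1 + (eqv.symm h).1 * ((1 + p : ℕ) : ZMod (p^2)) ^ (eqv.symm g).2.val,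
        (eqv.symm g).2 + (eqv.symm h).2) := by
    intro g h
    rw [Equiv.symm_apply_eq]
    have hg : g = fM (eqv.symm g) := (eqv.apply_symm_apply g).symm
    have hh : h = fM (eqv.symm h) := (eqv.apply_symm_apply h).symm
    conv_lhs => rw [hg, hh]
    exact aux_comb hx hy hswapM _ _ _ _
  let φ : M →* (Matrix (Fin (p + 1)) (Fin (p + 1)) K)ˣ :=
    { toFun := fun g => fU (eqv.symm g)
      map_one' := by
        show fU (eqv.symm (1 : M)) = 1
        rw [hsymm_one]
        show Xu ^ (0 : ZMod (p^2)).val * Yu ^ (0 : ZMod p).val = 1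
        simp [ZMod.val_zero]
      map_mul' := by
        intro g h
        show fU (eqv.symm (g * h)) = fU (eqv.symm g) * fU (eqv.symm h)
        rw [hmul g h]
        exact (aux_comb hXu hYu hswapU _ _ _ _).symm }
  constructor
  · refine ⟨φ, ?_, ?_⟩
    · -- injectivity
      intro g h hgh
      have hgh' : fU (eqv.symm g) = fU (eqv.symm h) := hgh
      set a1 := (eqv.symm g).1
      set a2 := (eqv.symm g).2
      set b1 := (eqv.symm h).1
      set b2 := (eqv.symm h).2
      have e1 : Xu ^ a1.val = Xu ^ b1.val * Xu ^ ((a1 - b1).val) := by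
        rw [← pow_val_add hXu]
        congr 1
        ring
      have e2 : Yu ^ a2.val = Yu ^ ((a2 - b2).val) * Yu ^ b2.val := by
        rw [← pow_val_add hYu]
        congr 1
        ring
      have e3 : Xu ^ b1.val * (Xu ^ ((a1 - b1).val) * Yu ^ ((a2 - b2).val)) * Yu ^ b2.val
          = Xu ^ b1.val * 1 * Yu ^ b2.val := by
        calc Xu ^ b1.val * (Xu ^ ((a1 - b1).val) * Yu ^ ((a2 - b2).val)) * Yu ^ b2.val
            = (Xu ^ b1.val * Xu ^ ((a1 - b1).val)) * (Yu ^ ((a2 - b2).val) * Yu ^ b2.val) := by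
              group
          _ = Xu ^ a1.val * Yu ^ a2.val := by rw [← e1, ← e2]
          _ = Xu ^ b1.val * Yu ^ b2.val := hgh'
          _ = Xu ^ b1.val * 1 * Yu ^ b2.val := by rw [mul_one]
      have key : Xu ^ ((a1 - b1).val) * Yu ^ ((a2 - b2).val) = 1 :=
        mul_left_cancel (mul_right_cancel e3)
      have keyM : (1 + shiftM p K 1) ^ ((a1 - b1).val) * (1 + EM p K) ^ ((a2 - b2).val) = 1 := by
        have := congrArg (Units.val) key
        rwa [Units.val_mul, hXuval, hYuval, Units.val_one] at this
      obtain ⟨hs, ht⟩ := kernel_lemma hp3 _ _ keyM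
      have hab1 : a1 = b1 := by
        have := sub_eq_zero.mp hs
        exact this
      have hab2 : a2 = b2 := sub_eq_zero.mp ht
      have : eqv.symm g = eqv.symm h := Prod.ext hab1 hab2
      exact eqv.symm.injective this
    · -- unipotency
      intro g
      show IsUnipotentUpper ((fU (eqv.symm g) : (Matrix (Fin (p+1)) (Fin (p+1)) K)ˣ) :
        Matrix (Fin (p+1)) (Fin (p+1)) K)
      rw [hfU]
      simp only [Units.val_mul, Units.val_pow_eq_pow_val]
      exact unip_mul (unip_pow (unip_Xm (by omega)) _) (unip_pow (unip_Ym (by omega)) _)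
  · -- no embedding in dimension r ≤ p
    rintro r hr ⟨ψ, hinj, hunip⟩
    have hxp1 : x ^ p = 1 := by
      have hB := hunip x
      have hBp : ((ψ x : (Matrix (Fin r) (Fin r) K)ˣ) : Matrix (Fin r) (Fin r) K) ^ p = 1 := by
        set B : Matrix (Fin r) (Fin r) K := ((ψ x : (Matrix (Fin r) (Fin r) K)ˣ) :
          Matrix (Fin r) (Fin r) K) with hBdef
        rcases Nat.eq_zero_or_pos r with hr0 | hrpos
        · subst hr0
          ext i j
          exact i.elim0
        · haveI : Nonempty (Fin r) := ⟨⟨0, hrpos⟩⟩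
          have hstrict : ∀ i j : Fin r, (j:ℕ) ≤ (i:ℕ) → (B - 1) i j = 0 := by
            intro i j hij
            rw [Matrix.sub_apply]
            rcases eq_or_lt_of_le hij with heq | hlt
            · have hji : j = i := Fin.ext heq
              subst hji
              rw [hB.2, Matrix.one_apply_eq, sub_self]
            · have hlt' : j < i := by rw [Fin.lt_def]; exact hlt
              rw [hB.1 i j hlt', Matrix.one_apply_ne (by rintro rfl; omega), sub_zero]
          have hnil : (B - 1) ^ r = 0 := strict_pow_all_zero _ hstrict
          have hnilp : (B - 1) ^ p = 0 := by
            have hpr : (B - 1) ^ p = (B - 1) ^ r * (B - 1) ^ (p - r) := by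
              rw [← pow_add, Nat.add_sub_cancel' hr]
            rw [hpr, hnil, zero_mul]
          have hB1 : B = 1 + (B - 1) := by abel
          rw [hB1, add_pow_char_of_commute _ (Commute.one_left _), one_pow, hnilp, add_zero]
      have hψ : (ψ x) ^ p = 1 := by
        apply Units.ext
        rw [Units.val_pow_eq_pow_val, Units.val_one]
        exact hBp
      have : ψ (x ^ p) = ψ 1 := by rw [map_pow, map_one, hψ]
      exact hinj this
    have hxc : y * x = x ^ 1 * y := by
      have h1 : x ^ (1 + p) = x := by rw [pow_add, hxp1, pow_one, mul_one]
      rw [pow_one, hswapM, h1]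
    have hsurj2 := range_subgroup_eq_top (by omega : 1 < p) (by omega : 1 < p) hxp1 hy hxc hgen
    have hle := Nat.card_le_card_of_surjective _ hsurj2
    rw [hcard, Nat.card_prod, Nat.card_zmod] at hle
    nlinarith [hp3]
end

section
/- Let G be a group, p a prime, and n ≥ 1. Every group homomorphism ρ: G → U_n(F_p) is trivial on G_{(n)}, the n-th term of the p-Zassenhaus filtration of G. -/
/-- The group `U_n(R)` of upper-triangular unipotent `n × n` matrices over `R`. -/
def UnipotentGrp (R : Type*) [CommRing R] (n : ℕ) : Subgroup (Matrix (Fin n) (Fin n) R)ˣ :=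
  Subgroup.closure {A : (Matrix (Fin n) (Fin n) R)ˣ |
    IsUnipotentUpper ((A : Matrix (Fin n) (Fin n) R))}

open scoped commutatorElement

/-- Fuel-based recursion computing the `p`-Zassenhaus filtration
`G_(1) = G`, `G_(n) = (G_(⌈n/p⌉))^p · ∏_{i+j=n, i,j ≥ 1} [G_(i), G_(j)]`;
for `p ≥ 2`, fuel `n` suffices to compute `G_(n)`. -/
def zassAux (p : ℕ) (G : Type*) [Group G] : ℕ → ℕ → Subgroup G
  | 0, _ => ⊤
  | (fuel + 1), n =>
    if n ≤ 1 then ⊤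
    else
      Subgroup.closure
        ({g | ∃ x ∈ zassAux p G fuel ((n + p - 1) / p), g = x ^ p} ∪
         {g | ∃ i j : ℕ, 1 ≤ i ∧ 1 ≤ j ∧ i + j = n ∧
              ∃ x ∈ zassAux p G fuel i, ∃ y ∈ zassAux p G fuel j, g = ⁅x, y⁆})

/-- The `p`-Zassenhaus filtration `G_(n)` of `G` (for `n ≥ 1`; junk value `⊤` at `0`). -/
def zassenhaus (p : ℕ) (G : Type*) [Group G] (n : ℕ) : Subgroup G := zassAux p G n n

section SLev

variable {R : Type*} [CommRing R] {n : ℕ}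

/-- `N` vanishes below the `k`-th superdiagonal. -/
def SLev (k : ℕ) (N : Matrix (Fin n) (Fin n) R) : Prop :=
  ∀ i j : Fin n, (j : ℕ) < (i : ℕ) + k → N i j = 0

lemma SLev.mono {k l : ℕ} (h : k ≤ l) {N : Matrix (Fin n) (Fin n) R} (hN : SLev l N) :
    SLev k N := fun i j hij => hN i j (by omega)

lemma SLev.zero {k : ℕ} : SLev k (0 : Matrix (Fin n) (Fin n) R) := fun _ _ _ => rfl

lemma SLev.add {k : ℕ} {M N : Matrix (Fin n) (Fin n) R} (hM : SLev k M) (hN : SLev k N) :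
    SLev k (M + N) := fun i j h => by
  simp [Matrix.add_apply, hM i j h, hN i j h]

lemma SLev.neg {k : ℕ} {N : Matrix (Fin n) (Fin n) R} (hN : SLev k N) : SLev k (-N) :=
  fun i j h => by simp [Matrix.neg_apply, hN i j h]

lemma SLev.one : SLev 0 (1 : Matrix (Fin n) (Fin n) R) := fun i j h =>
  Matrix.one_apply_ne (Fin.ne_of_val_ne (by omega))

lemma SLev.mul {a b : ℕ} {M N : Matrix (Fin n) (Fin n) R} (hM : SLev a M) (hN : SLev b N) :
    SLev (a + b) (M * N) := by
  intro i j hij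
  rw [Matrix.mul_apply]
  apply Finset.sum_eq_zero
  intro l _
  by_cases hl : (l : ℕ) < (i : ℕ) + a
  · rw [hM i l hl, zero_mul]
  · rw [hN l j (by omega), mul_zero]

lemma SLev.pow {a : ℕ} {N : Matrix (Fin n) (Fin n) R} (hN : SLev a N) (m : ℕ) :
    SLev (m * a) (N ^ m) := by
  induction m with
  | zero => simpa using SLev.one
  | succ m ih =>
    rw [pow_succ, Nat.succ_mul]
    exact ih.mul hN

lemma SLev.sum {k : ℕ} {ι : Type*} {s : Finset ι} {f : ι → Matrix (Fin n) (Fin n) R}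
    (h : ∀ t ∈ s, SLev k (f t)) : SLev k (∑ t ∈ s, f t) := by
  intro i j hij
  rw [Matrix.sum_apply]
  exact Finset.sum_eq_zero fun t ht => h t ht i j hij

lemma SLev.eq_zero {k : ℕ} (hk : n ≤ k) {N : Matrix (Fin n) (Fin n) R} (hN : SLev k N) :
    N = 0 := by
  ext i j
  exact hN i j (by omega)

/-- The congruence filtration of the unipotent group. -/
def levH (R : Type*) [CommRing R] (n k : ℕ) : Subgroup (Matrix (Fin n) (Fin n) R)ˣ where
  carrier := {x | SLev (max 1 k) ((x : Matrix (Fin n) (Fin n) R) - 1)}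
  one_mem' := by simpa using SLev.zero
  mul_mem' := by
    intro x y hx hy
    have hx' : SLev (max 1 k) ((x : Matrix (Fin n) (Fin n) R) - 1) := hx
    have hy' : SLev (max 1 k) ((y : Matrix (Fin n) (Fin n) R) - 1) := hy
    show SLev (max 1 k) ((↑(x * y) : Matrix (Fin n) (Fin n) R) - 1)
    have h : ((↑(x * y) : Matrix (Fin n) (Fin n) R) - 1)
        = ((x : Matrix (Fin n) (Fin n) R) - 1) * ((y : Matrix (Fin n) (Fin n) R) - 1)
          + (((x : Matrix (Fin n) (Fin n) R) - 1) + ((y : Matrix (Fin n) (Fin n) R) - 1)) := by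
      rw [Units.val_mul]; noncomm_ring
    rw [h]
    exact ((hx'.mul hy').mono (by omega)).add (hx'.add hy')
  inv_mem' := by
    intro x hx
    set m := max 1 k with hm
    have hN : SLev m ((x : Matrix (Fin n) (Fin n) R) - 1) := hx
    set N : Matrix (Fin n) (Fin n) R := (x : Matrix (Fin n) (Fin n) R) - 1 with hNdef
    set B : Matrix (Fin n) (Fin n) R := ∑ t ∈ Finset.range n, (-N) ^ t with hB
    have hNn : (-N) ^ n = 0 := by
      apply SLev.eq_zero (k := n * m) (Nat.le_mul_of_pos_right n (by omega))
      exact hN.neg.pow n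
    have hmulB : (x : Matrix (Fin n) (Fin n) R) * B = 1 := by
      have h1 := mul_geom_sum (n := n) (x := -N)
      have h2 : -N - 1 = -(x : Matrix (Fin n) (Fin n) R) := by rw [hNdef]; abel
      rw [h2, hNn, neg_mul, zero_sub] at h1
      have := neg_injective h1
      rw [hB]
      exact this
    have hBmul : B * (x : Matrix (Fin n) (Fin n) R) = 1 := by
      have h1 := geom_sum_mul (n := n) (x := -N)
      have h2 : -N - 1 = -(x : Matrix (Fin n) (Fin n) R) := by rw [hNdef]; abel
      rw [h2, hNn, mul_neg, zero_sub] at h1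
      have := neg_injective h1
      rw [hB]
      exact this
    have hinv : ((x⁻¹ : (Matrix (Fin n) (Fin n) R)ˣ) : Matrix (Fin n) (Fin n) R) = B := by
      have h3 : ((x⁻¹ : (Matrix (Fin n) (Fin n) R)ˣ) : Matrix (Fin n) (Fin n) R)
          * ((x : Matrix (Fin n) (Fin n) R) * B)
          = ((x⁻¹ : (Matrix (Fin n) (Fin n) R)ˣ) : Matrix (Fin n) (Fin n) R) := by
        rw [hmulB, mul_one]
      rw [← mul_assoc] at h3
      have h4 : ((x⁻¹ : (Matrix (Fin n) (Fin n) R)ˣ) : Matrix (Fin n) (Fin n) R)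
          * (x : Matrix (Fin n) (Fin n) R) = 1 := by
        rw [← Units.val_mul, inv_mul_cancel, Units.val_one]
      rw [h4, one_mul] at h3
      exact h3.symm
    show SLev m (((x⁻¹ : (Matrix (Fin n) (Fin n) R)ˣ) : Matrix (Fin n) (Fin n) R) - 1)
    rw [hinv]
    rcases n with _ | n'
    · intro i j _; exact i.elim0
    · have hsum : B - 1 = ∑ t ∈ Finset.range n', (-N) ^ (t + 1) := by
        rw [hB, Finset.sum_range_succ']
        simp
      rw [hsum]
      apply SLev.sum
      intro t _
      exact ((hN.neg.pow (t + 1)).mono (by nlinarith [Nat.le_max_left 1 k]))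

lemma levH_antitone {a b : ℕ} (h : a ≤ b) : levH R n b ≤ levH R n a := by
  intro x hx
  exact SLev.mono (by omega) hx

lemma mem_levH_iff {k : ℕ} {x : (Matrix (Fin n) (Fin n) R)ˣ} :
    x ∈ levH R n k ↔ SLev (max 1 k) ((x : Matrix (Fin n) (Fin n) R) - 1) := Iff.rfl

lemma levH_slev0 {k : ℕ} {x : (Matrix (Fin n) (Fin n) R)ˣ} (hx : x ∈ levH R n k) :
    SLev 0 (x : Matrix (Fin n) (Fin n) R) := by
  have h : (x : Matrix (Fin n) (Fin n) R)
      = ((x : Matrix (Fin n) (Fin n) R) - 1) + 1 := by abel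
  rw [h]
  exact ((mem_levH_iff.mp hx).mono (by omega)).add SLev.one

lemma levH_commutator {a b : ℕ} {x y : (Matrix (Fin n) (Fin n) R)ˣ}
    (hx : x ∈ levH R n a) (hy : y ∈ levH R n b) : ⁅x, y⁆ ∈ levH R n (a + b) := by
  have hM : SLev (max 1 a) ((x : Matrix (Fin n) (Fin n) R) - 1) := hx
  have hN : SLev (max 1 b) ((y : Matrix (Fin n) (Fin n) R) - 1) := hy
  have h1 : (x : Matrix (Fin n) (Fin n) R) * ((x⁻¹ : _ˣ) : Matrix (Fin n) (Fin n) R) = 1 := by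
    rw [← Units.val_mul, mul_inv_cancel, Units.val_one]
  have h2 : (y : Matrix (Fin n) (Fin n) R) * ((y⁻¹ : _ˣ) : Matrix (Fin n) (Fin n) R) = 1 := by
    rw [← Units.val_mul, mul_inv_cancel, Units.val_one]
  have key : ((⁅x, y⁆ : (Matrix (Fin n) (Fin n) R)ˣ) : Matrix (Fin n) (Fin n) R) - 1
      = ((x : Matrix (Fin n) (Fin n) R) * (y : Matrix (Fin n) (Fin n) R)
          - (y : Matrix (Fin n) (Fin n) R) * (x : Matrix (Fin n) (Fin n) R))
        * (((x⁻¹ : _ˣ) : Matrix (Fin n) (Fin n) R) * ((y⁻¹ : _ˣ) : Matrix (Fin n) (Fin n) R)) := by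
    rw [commutatorElement_def, Units.val_mul, Units.val_mul, Units.val_mul, sub_mul]
    have e1 : (y : Matrix (Fin n) (Fin n) R) * (x : Matrix (Fin n) (Fin n) R)
        * (((x⁻¹ : _ˣ) : Matrix (Fin n) (Fin n) R) * ((y⁻¹ : _ˣ) : Matrix (Fin n) (Fin n) R))
        = 1 := by
      rw [mul_assoc, ← mul_assoc (x : Matrix (Fin n) (Fin n) R), h1, one_mul, h2]
    rw [e1, mul_assoc]
  show SLev (max 1 (a + b)) _
  rw [key]
  have hC : SLev (max 1 a + max 1 b)
      ((x : Matrix (Fin n) (Fin n) R) * (y : Matrix (Fin n) (Fin n) R)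
        - (y : Matrix (Fin n) (Fin n) R) * (x : Matrix (Fin n) (Fin n) R)) := by
    have hid : (x : Matrix (Fin n) (Fin n) R) * (y : Matrix (Fin n) (Fin n) R)
        - (y : Matrix (Fin n) (Fin n) R) * (x : Matrix (Fin n) (Fin n) R)
        = ((x : Matrix (Fin n) (Fin n) R) - 1) * ((y : Matrix (Fin n) (Fin n) R) - 1)
          + -(((y : Matrix (Fin n) (Fin n) R) - 1) * ((x : Matrix (Fin n) (Fin n) R) - 1)) := by
      noncomm_ring
    rw [hid]
    exact (hM.mul hN).add ((hN.mul hM).mono (by omega)).neg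
  have hD : SLev 0
      (((x⁻¹ : _ˣ) : Matrix (Fin n) (Fin n) R) * ((y⁻¹ : _ˣ) : Matrix (Fin n) (Fin n) R)) := by
    have := (levH_slev0 ((levH R n a).inv_mem hx)).mul (levH_slev0 ((levH R n b).inv_mem hy))
    simpa using this
  have := hC.mul hD
  exact this.mono (by omega)

lemma levH_pow_p {p : ℕ} (hp : p.Prime) [CharP R p] (hn : 1 ≤ n)
    {a : ℕ} {x : (Matrix (Fin n) (Fin n) R)ˣ} (hx : x ∈ levH R n a) :
    x ^ p ∈ levH R n (p * a) := by
  haveI : Nonempty (Fin n) := ⟨⟨0, hn⟩⟩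
  haveI : Fact p.Prime := ⟨hp⟩
  have hN : SLev (max 1 a) ((x : Matrix (Fin n) (Fin n) R) - 1) := hx
  show SLev (max 1 (p * a)) _
  have hval : ((x ^ p : (Matrix (Fin n) (Fin n) R)ˣ) : Matrix (Fin n) (Fin n) R)
      = (1 + ((x : Matrix (Fin n) (Fin n) R) - 1)) ^ p := by
    rw [Units.val_pow_eq_pow_val]
    congr 1
    abel
  rw [hval, add_pow_char_of_commute p (Commute.one_left _), one_pow]
  have h : (1 : Matrix (Fin n) (Fin n) R) + ((x : Matrix (Fin n) (Fin n) R) - 1) ^ p - 1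
      = ((x : Matrix (Fin n) (Fin n) R) - 1) ^ p := by abel
  rw [h]
  apply (hN.pow p).mono
  have hp2 := hp.two_le
  rcases Nat.eq_zero_or_pos a with rfl | ha
  · simpa using hp.one_lt.le
  · rw [Nat.max_eq_right ha, Nat.max_eq_right (Nat.one_le_iff_ne_zero.mpr (by positivity))]

lemma levH_eq_one {x : (Matrix (Fin n) (Fin n) R)ˣ} (hn : 1 ≤ n) (hx : x ∈ levH R n n) :
    x = 1 := by
  have hN : SLev (max 1 n) ((x : Matrix (Fin n) (Fin n) R) - 1) := hx
  have := SLev.eq_zero (k := max 1 n) (Nat.le_max_right 1 n) hN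
  apply Units.ext
  rw [Units.val_one]
  rwa [sub_eq_zero] at this

lemma unipotent_le_levH_one : UnipotentGrp R n ≤ levH R n 1 := by
  rw [UnipotentGrp]
  apply (Subgroup.closure_le _).mpr
  rintro A ⟨hlow, hdiag⟩
  show SLev (max 1 1) ((A : Matrix (Fin n) (Fin n) R) - 1)
  intro i j hij
  rw [Matrix.sub_apply]
  by_cases h : (j : ℕ) < (i : ℕ)
  · rw [hlow i j (by exact_mod_cast h), Matrix.one_apply_ne (Fin.ne_of_val_ne (by omega)),
      sub_zero]
  · have : i = j := Fin.ext (by simp at hij; omega)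
    subst this
    rw [hdiag i, Matrix.one_apply_eq, sub_self]

end SLev

lemma zassAux_comap {p : ℕ} {G H : Type*} [Group G] [Group H] (f : G →* H) :
    ∀ fuel k, zassAux p G fuel k ≤ (zassAux p H fuel k).comap f := by
  intro fuel
  induction fuel with
  | zero => intro k; simp [zassAux]
  | succ fuel ih =>
    intro k
    by_cases hk : k ≤ 1
    · simp [zassAux, hk]
    · rw [zassAux, zassAux, if_neg hk, if_neg hk]
      apply (Subgroup.closure_le _).mpr
      rintro g (⟨x, hx, rfl⟩ | ⟨i, j, hi, hj, hij, x, hx, y, hy, rfl⟩)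
      · rw [SetLike.mem_coe, Subgroup.mem_comap, map_pow]
        exact Subgroup.subset_closure (Or.inl ⟨f x, ih _ hx, rfl⟩)
      · rw [SetLike.mem_coe, Subgroup.mem_comap, map_commutatorElement]
        exact Subgroup.subset_closure (Or.inr ⟨i, j, hi, hj, hij, f x, ih _ hx, f y, ih _ hy, rfl⟩)

lemma zass_le_levH (p n : ℕ) (hp : p.Prime) (hn : 1 ≤ n) :
    ∀ fuel k, 1 ≤ k → k ≤ fuel →
      ∀ x ∈ zassAux p (↥(UnipotentGrp (ZMod p) n)) fuel k,
        (UnipotentGrp (ZMod p) n).subtype x ∈ levH (ZMod p) n k := by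
  intro fuel
  induction fuel with
  | zero => intro k hk1 hk0; omega
  | succ fuel ih =>
    intro k hk1 hkf x hx
    by_cases hk : k ≤ 1
    · have hk1' : k = 1 := by omega
      subst hk1'
      exact unipotent_le_levH_one x.2
    · rw [zassAux, if_neg hk] at hx
      refine (Subgroup.closure_le ((levH (ZMod p) n k).comap
          (UnipotentGrp (ZMod p) n).subtype)).mpr ?_ hx
      rintro g (⟨y, hy, rfl⟩ | ⟨i, j, hi, hj, hij, y, hy, z, hz, rfl⟩)
      · rw [SetLike.mem_coe, Subgroup.mem_comap, map_pow]
        set q := (k + p - 1) / p with hq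
        have hp2 := hp.two_le
        have hadd : k + p ≤ k * p := Nat.add_le_mul (by omega) hp2
        have hqk : q < k := by
          rw [hq]
          exact (Nat.div_lt_iff_lt_mul hp.pos).mpr (by omega)
        have hkpq : k ≤ p * q := by
          have h1 : p * q + (k + p - 1) % p = k + p - 1 := by
            rw [hq]; exact Nat.div_add_mod _ _
          have h2 : (k + p - 1) % p < p := Nat.mod_lt _ hp.pos
          omega
        have hq1 : 1 ≤ q := by
          rw [hq]
          exact (Nat.one_le_div_iff hp.pos).mpr (by omega)
        have := ih q hq1 (by omega) y hy
        exact levH_antitone hkpq (levH_pow_p hp hn this)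
      · rw [SetLike.mem_coe, Subgroup.mem_comap, map_commutatorElement]
        have hyi := ih i hi (by omega) y hy
        have hzj := ih j hj (by omega) z hz
        have := levH_commutator hyi hzj
        rwa [hij] at this

/-- For any group `G`, prime `p` and `n ≥ 1`, every group homomorphism
`ρ : G → U_n(𝔽_p)` is trivial on `G_(n)`, the `n`-th term of the `p`-Zassenhaus
filtration of `G`. -/
theorem stmt15 (G : Type*) [Group G] (p n : ℕ) (hp : p.Prime) (hn : 1 ≤ n)
    (ρ : G →* ↥(UnipotentGrp (ZMod p) n)) :
    ∀ g ∈ zassenhaus p G n, ρ g = 1 := by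
  intro g hg
  have h1 : ρ g ∈ zassAux p (↥(UnipotentGrp (ZMod p) n)) n n :=
    zassAux_comap ρ n n hg
  have h2 := zass_le_levH p n hp hn n n hn le_rfl _ h1
  have h3 := levH_eq_one hn h2
  have h4 : (UnipotentGrp (ZMod p) n).subtype (ρ g) = (UnipotentGrp (ZMod p) n).subtype 1 := by
    rw [map_one]; exact h3
  exact (UnipotentGrp (ZMod p) n).subtype_injective h4
end
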